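/- (Example 1.) Fix λ > 0, d ≥ 1, and x₁ ∈ ℝ^{d}, and define F : ℝ × ℝ × ℝ^{d} → ℝ by F(a, b, w) = (1 + a·exp(⟨w, x₁⟩ + b))² + λ·a². Then: (i) F(a,b,w) > 0 for all (a,b,w); (ii) the infimum of F over ℝ × ℝ × ℝ^{d} equals 0 (e.g., F(−exp(−1/ε), 1/ε − ⟨w, x₁⟩, w) = λ·exp(−2/ε) → 0 as ε → 0⁺); and (iii) F has no local minimum point. -/

import Mathlib

open scoped RealInnerProductSpace

noncomputable section

/-- **Example 1.** For `λ > 0`, `d ≥ 1`, `x₁ ∈ ℝ^d` and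
`F(a,b,w) = (1 + a·exp(⟨w,x₁⟩ + b))² + λa²`: (i) `F > 0` everywhere; (ii) the infimum
of `F` over `ℝ × ℝ × ℝ^d` equals `0`; (iii) `F` has no local minimum point. -/
theorem example_one
    (lam : ℝ) (hlam : 0 < lam) (d : ℕ) (hd : 1 ≤ d)
    (x₁ : EuclideanSpace ℝ (Fin d))
    (F : ℝ × ℝ × EuclideanSpace ℝ (Fin d) → ℝ)
    (hF : ∀ (a b : ℝ) (w : EuclideanSpace ℝ (Fin d)),
      F (a, b, w) = (1 + a * Real.exp (⟪w, x₁⟫ + b)) ^ 2 + lam * a ^ 2) :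
    (∀ p : ℝ × ℝ × EuclideanSpace ℝ (Fin d), 0 < F p) ∧
    IsGLB (Set.range F) 0 ∧
    ∀ p : ℝ × ℝ × EuclideanSpace ℝ (Fin d), ¬ IsLocalMin F p := by
  have hpos : ∀ p : ℝ × ℝ × EuclideanSpace ℝ (Fin d), 0 < F p := by
    rintro ⟨a, b, w⟩
    rw [hF]
    rcases eq_or_ne a 0 with h | h
    · simp [h]
    · have h1 : (0:ℝ) ≤ (1 + a * Real.exp (⟪w, x₁⟫ + b)) ^ 2 := sq_nonneg _
      have h2 : 0 < lam * a ^ 2 := by positivity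
      linarith
  refine ⟨hpos, ?_, ?_⟩
  · constructor
    · rintro y ⟨p, rfl⟩
      exact (hpos p).le
    · intro c hc
      have key : ∀ t : ℝ, c ≤ lam * Real.exp (-t) ^ 2 := by
        intro t
        have hm : F (-Real.exp (-t), t, (0 : EuclideanSpace ℝ (Fin d)))
            = lam * Real.exp (-t) ^ 2 := by
          rw [hF]
          have : ⟪(0 : EuclideanSpace ℝ (Fin d)), x₁⟫ = (0:ℝ) := inner_zero_left x₁
          rw [this, zero_add]
          have he : Real.exp (-t) * Real.exp t = 1 := by
            rw [← Real.exp_add]; simp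
          rw [neg_mul, he]
          ring
        have := hc ⟨(-Real.exp (-t), t, (0 : EuclideanSpace ℝ (Fin d))), rfl⟩
        rwa [hm] at this
      have hlim : Filter.Tendsto (fun t : ℝ => lam * Real.exp (-t) ^ 2)
          Filter.atTop (nhds 0) := by
        have h0 : Filter.Tendsto (fun t : ℝ => Real.exp (-t)) Filter.atTop (nhds 0) :=
          Real.tendsto_exp_neg_atTop_nhds_zero
        have := (h0.pow 2).const_mul lam
        simpa using this
      exact ge_of_tendsto hlim (Filter.Eventually.of_forall key)
  · rintro ⟨a, b, w⟩ hmin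
    set c : ℝ := ⟪w, x₁⟫ with hc
    set E : ℝ := Real.exp (c + b) with hE
    have hEpos : 0 < E := Real.exp_pos _
    -- restriction along a
    have hmin1 : IsLocalMin (fun t : ℝ => (1 + t * E) ^ 2 + lam * t ^ 2) a := by
      have hcont : Filter.Tendsto (fun t : ℝ => (t, b, w)) (nhds a) (nhds (a, b, w)) := by
        exact (Continuous.prodMk continuous_id (continuous_const)).tendsto a
      have := IsMinFilter.comp_tendsto (g := fun t : ℝ => (t, b, w)) (b := a) hmin hcont
      refine this.congr ?_ (by simp [Function.comp, hF, hE, hc])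
      filter_upwards with t
      simp [Function.comp, hF, hE, hc]
    have hmin2 : IsLocalMin (fun t : ℝ => (1 + a * Real.exp (c + t)) ^ 2 + lam * a ^ 2) b := by
      have hcont : Filter.Tendsto (fun t : ℝ => (a, t, w)) (nhds b) (nhds (a, b, w)) := by
        exact (continuous_const.prodMk ((continuous_id).prodMk continuous_const)).tendsto b
      have := IsMinFilter.comp_tendsto (g := fun t : ℝ => (a, t, w)) (b := b) hmin hcont
      refine this.congr ?_ (by simp [Function.comp, hF, hc])
      filter_upwards with t
      simp [Function.comp, hF, hc]
    have hd1 : HasDerivAt (fun t : ℝ => (1 + t * E) ^ 2 + lam * t ^ 2)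
        (2 * (1 + a * E) * E + lam * (2 * a)) a := by
      have h1 : HasDerivAt (fun t : ℝ => 1 + t * E) E a := by
        simpa using ((hasDerivAt_id a).mul_const E).const_add 1
      have h2 : HasDerivAt (fun t : ℝ => (1 + t * E) ^ 2) (2 * (1 + a * E) * E) a := by
        have := h1.fun_pow 2
        simpa [mul_comm, mul_assoc, mul_left_comm] using this
      have h3 : HasDerivAt (fun t : ℝ => lam * t ^ 2) (lam * (2 * a)) a := by
        have := (hasDerivAt_pow 2 a).const_mul lam
        simpa [mul_comm, mul_assoc, mul_left_comm] using this
      exact h2.add h3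
    have hd2 : HasDerivAt (fun t : ℝ => (1 + a * Real.exp (c + t)) ^ 2 + lam * a ^ 2)
        (2 * (1 + a * E) * (a * E)) b := by
      have h1 : HasDerivAt (fun t : ℝ => Real.exp (c + t)) E b := by
        have := ((hasDerivAt_id b).const_add c).exp
        simpa [hE] using this
      have h2 : HasDerivAt (fun t : ℝ => 1 + a * Real.exp (c + t)) (a * E) b := by
        simpa using (h1.const_mul a).const_add 1
      have h3 : HasDerivAt (fun t : ℝ => (1 + a * Real.exp (c + t)) ^ 2)
          (2 * (1 + a * E) * (a * E)) b := by
        have := h2.fun_pow 2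
        simpa [hE, mul_comm, mul_assoc, mul_left_comm] using this
      simpa using h3.add_const (lam * a ^ 2)
    have e1 : 2 * (1 + a * E) * E + lam * (2 * a) = 0 := by
      have := hmin1.deriv_eq_zero
      rwa [hd1.deriv] at this
    have e2 : 2 * (1 + a * E) * (a * E) = 0 := by
      have := hmin2.deriv_eq_zero
      rwa [hd2.deriv] at this
    rcases mul_eq_zero.mp e2 with h | h
    · rcases mul_eq_zero.mp h with h' | h'
      · norm_num at h'
      · -- 1 + a * E = 0
        have ha : a = 0 := by
          have : lam * (2 * a) = 0 := by
            rw [h'] at e1; linarith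
          have := mul_eq_zero.mp this
          rcases this with h'' | h''
          · exact absurd h'' (ne_of_gt hlam)
          · linarith
        rw [ha] at h'; simp at h'
    · rcases mul_eq_zero.mp h with h' | h'
      · -- a = 0
        rw [h'] at e1
        simp at e1
        nlinarith [hEpos]
      · exact absurd h' (ne_of_gt hEpos)
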